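/- Let (M,d) be an ultrametric pointed metric space. Then for every sequence (μ_n) of finitely supported functions μ_n : M → ℝ with sup_n ‖μ_n‖ < ∞ (free norm), one has ca(μ_n) ≤ de(μ_n). (This is equivalent to the Lipschitz-free space F(M) being 1-Schur.) -/

import Mathlib

open scoped BigOperators

/-- The free norm of a finitely supported function `μ : M → ℝ` over a pointed metric
space `(M, z)`. -/
noncomputable def freeNorm {M : Type*} [MetricSpace M] (z : M) (μ : M →₀ ℝ) : ℝ :=
  sSup {s | ∃ f : M → ℝ, f z = 0 ∧ LipschitzWith 1 f ∧ s = ∑ x ∈ μ.support, μ x * f x}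

/-- `ca(μ_n) = inf_n sup {‖μ_k - μ_l‖ : k, l ≥ n}` computed with the free norm. -/
noncomputable def seqCa {M : Type*} [MetricSpace M] (z : M) (μ : ℕ → M →₀ ℝ) : ℝ :=
  sInf {t | ∃ n : ℕ, t = sSup {s | ∃ k, n ≤ k ∧ ∃ l, n ≤ l ∧ s = freeNorm z (μ k - μ l)}}

/-- `de(μ_n) = sup_f inf_n sup {|⟨μ_k - μ_l, f⟩| : k, l ≥ n}` over `1`-Lipschitz `f`
vanishing at the base point. -/
noncomputable def seqDe {M : Type*} [MetricSpace M] (z : M) (μ : ℕ → M →₀ ℝ) : ℝ :=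
  sSup {t | ∃ f : M → ℝ, f z = 0 ∧ LipschitzWith 1 f ∧
    t = sInf {u | ∃ n : ℕ, u = sSup {s | ∃ k, n ≤ k ∧ ∃ l, n ≤ l ∧
      s = |∑ x ∈ (μ k - μ l).support, (μ k - μ l) x * f x|}}}

set_option linter.unusedSectionVars false
set_option maxHeartbeats 1000000

/-! Auxiliary machinery for the 1-Schur property of free spaces over ultrametric spaces. -/

section Basics

variable {M : Type*} [MetricSpace M]

/-- The pairing between a finitely supported function and a test function. -/
noncomputable def fpair (μ : M →₀ ℝ) (f : M → ℝ) : ℝ := ∑ x ∈ μ.support, μ x * f x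

lemma fpair_eq_sum (μ : M →₀ ℝ) (f : M → ℝ) :
    fpair μ f = μ.sum fun x m => m * f x := rfl

lemma fpair_sub (μ ν : M →₀ ℝ) (f : M → ℝ) :
    fpair (μ - ν) f = fpair μ f - fpair ν f := by
  simp only [fpair_eq_sum]
  exact Finsupp.sum_sub_index (by intros; ring)

lemma fpair_zero (f : M → ℝ) : fpair (0 : M →₀ ℝ) f = 0 := by
  simp [fpair]

lemma fpair_neg_fun (μ : M →₀ ℝ) (f : M → ℝ) :
    fpair μ (fun x => -f x) = -fpair μ f := by
  simp [fpair, Finset.sum_neg_distrib]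

lemma fpair_smul_fun (μ : M →₀ ℝ) (f : M → ℝ) (a : ℝ) :
    fpair μ (fun x => a * f x) = a * fpair μ f := by
  simp only [fpair, Finset.mul_sum]
  exact Finset.sum_congr rfl fun x _ => by ring

/-- Feasible test functions. -/
def Feas (z : M) (f : M → ℝ) : Prop := f z = 0 ∧ LipschitzWith 1 f

lemma Feas.abs_le {z : M} {f : M → ℝ} (hf : Feas z f) (x : M) : |f x| ≤ dist x z := by
  have := hf.2.dist_le_mul x z
  rw [Real.dist_eq, hf.1, sub_zero] at this
  simpa using this

lemma Feas.neg {z : M} {f : M → ℝ} (hf : Feas z f) : Feas z (fun x => -f x) := by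
  refine ⟨by simp [hf.1], ?_⟩
  have := hf.2.neg
  simpa [Pi.neg_def] using this

/-- The defining set of the free norm. -/
def freeNormSet (z : M) (μ : M →₀ ℝ) : Set ℝ :=
  {s | ∃ f : M → ℝ, f z = 0 ∧ LipschitzWith 1 f ∧ s = ∑ x ∈ μ.support, μ x * f x}

lemma freeNorm_eq_sSup (z : M) (μ : M →₀ ℝ) :
    freeNorm z μ = sSup (freeNormSet z μ) := rfl

lemma fpair_mem_freeNormSet {z : M} {f : M → ℝ} (hf : Feas z f) (μ : M →₀ ℝ) :
    fpair μ f ∈ freeNormSet z μ := ⟨f, hf.1, hf.2, rfl⟩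

lemma freeNormSet_nonempty (z : M) (μ : M →₀ ℝ) : (freeNormSet z μ).Nonempty := by
  refine ⟨0, fun _ => 0, rfl, ?_, by simp⟩
  intro x y
  simp

lemma freeNormSet_bddAbove (z : M) (μ : M →₀ ℝ) :
    BddAbove (freeNormSet z μ) := by
  refine ⟨∑ x ∈ μ.support, |μ x| * dist x z, ?_⟩
  rintro s ⟨f, hf0, hlip, rfl⟩
  calc ∑ x ∈ μ.support, μ x * f x ≤ ∑ x ∈ μ.support, |μ x * f x| :=
        Finset.sum_le_sum fun x _ => le_abs_self _
    _ ≤ ∑ x ∈ μ.support, |μ x| * dist x z := by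
        refine Finset.sum_le_sum fun x _ => ?_
        rw [abs_mul]
        exact mul_le_mul_of_nonneg_left (Feas.abs_le ⟨hf0, hlip⟩ x) (abs_nonneg _)

lemma freeNorm_nonneg (z : M) (μ : M →₀ ℝ) : 0 ≤ freeNorm z μ := by
  rw [freeNorm_eq_sSup]
  refine le_csSup (freeNormSet_bddAbove z μ) ?_
  refine ⟨fun _ => 0, rfl, ?_, by simp⟩
  intro x y; simp

lemma fpair_le_freeNorm {z : M} {f : M → ℝ} (hf : Feas z f) (μ : M →₀ ℝ) :
    fpair μ f ≤ freeNorm z μ :=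
  le_csSup (freeNormSet_bddAbove z μ) (fpair_mem_freeNormSet hf μ)

lemma abs_fpair_le_freeNorm {z : M} {f : M → ℝ} (hf : Feas z f) (μ : M →₀ ℝ) :
    |fpair μ f| ≤ freeNorm z μ := by
  rw [abs_le]
  constructor
  · have := fpair_le_freeNorm hf.neg μ
    rw [fpair_neg_fun] at this
    linarith
  · exact fpair_le_freeNorm hf μ

lemma freeNorm_zero (z : M) : freeNorm (M := M) z 0 = 0 := by
  rw [freeNorm_eq_sSup]
  apply le_antisymm
  · refine csSup_le (freeNormSet_nonempty z 0) ?_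
    rintro s ⟨f, hf0, hlip, rfl⟩
    simp
  · exact freeNorm_nonneg z 0

lemma freeNorm_le_of_forall {z : M} {μ : M →₀ ℝ} {B : ℝ}
    (h : ∀ f : M → ℝ, Feas z f → fpair μ f ≤ B) : freeNorm z μ ≤ B := by
  rw [freeNorm_eq_sSup]
  refine csSup_le (freeNormSet_nonempty z μ) ?_
  rintro s ⟨f, hf0, hlip, rfl⟩
  exact h f ⟨hf0, hlip⟩

end Basics

section Grid

variable {M : Type*} [MetricSpace M]

/-- weight of level `k` in the geometric grid with ratio `θ`. -/
noncomputable def wgt (θ : ℝ) (k : ℤ) : ℝ := (θ ^ (k + 1) - θ ^ k) / 2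

lemma wgt_pos {θ : ℝ} (hθ : 1 < θ) (k : ℤ) : 0 < wgt θ k := by
  have := zpow_lt_zpow_right₀ hθ (lt_add_one k)
  unfold wgt; linarith

lemma two_wgt (θ : ℝ) (k : ℤ) : 2 * wgt θ k = θ ^ (k + 1) - θ ^ k := by
  unfold wgt; ring

/-- telescoping sum over an interval of levels. -/
lemma sum_Icc_zpow_sub {θ : ℝ} (l m : ℤ) (hlm : l ≤ m) :
    ∑ k ∈ Finset.Icc l m, (θ ^ (k + 1) - θ ^ k) = θ ^ (m + 1) - θ ^ l := by
  refine Int.le_induction (motive := fun j _ => ∑ k ∈ Finset.Icc l j, (θ ^ (k + 1) - θ ^ k) = θ ^ (j + 1) - θ ^ l) ?_ ?_ m hlm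
  · simp
  · intro n hn ih
    have hins : Finset.Icc l (n + 1) = insert (n + 1) (Finset.Icc l n) := by
      ext k; simp only [Finset.mem_Icc, Finset.mem_insert]; omega
    have hnm : (n + 1) ∉ Finset.Icc l n := by simp only [Finset.mem_Icc]; omega
    rw [hins, Finset.sum_insert hnm, ih]
    ring

lemma sum_zpow_sub_le {θ : ℝ} (hθ : 1 < θ) (m : ℤ) (F : Finset ℤ)
    (hF : ∀ k ∈ F, k ≤ m) : ∑ k ∈ F, (θ ^ (k + 1) - θ ^ k) ≤ θ ^ (m + 1) := by
  have hθ0 : (0:ℝ) < θ := lt_trans one_pos hθ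
  rcases F.eq_empty_or_nonempty with rfl | hne
  · simpa using (zpow_pos hθ0 (m+1)).le
  · have hsub : F ⊆ Finset.Icc (F.min' hne) m := by
      intro k hk
      exact Finset.mem_Icc.mpr ⟨Finset.min'_le F k hk, hF k hk⟩
    calc ∑ k ∈ F, (θ ^ (k + 1) - θ ^ k)
        ≤ ∑ k ∈ Finset.Icc (F.min' hne) m, (θ ^ (k + 1) - θ ^ k) := by
          refine Finset.sum_le_sum_of_subset_of_nonneg hsub fun k _ _ => ?_
          have := zpow_lt_zpow_right₀ hθ (lt_add_one k)
          linarith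
      _ = θ ^ (m + 1) - θ ^ (F.min' hne) := by
          refine sum_Icc_zpow_sub _ _ ?_
          exact hF _ (F.min'_mem hne)
      _ ≤ θ ^ (m + 1) := by
          have := zpow_pos hθ0 (F.min' hne); linarith

lemma exists_zpow_lt {θ : ℝ} (hθ : 1 < θ) {x : ℝ} (hx : 0 < x) : ∃ k : ℤ, θ ^ k < x := by
  obtain ⟨n, hn⟩ := pow_unbounded_of_one_lt x⁻¹ hθ
  refine ⟨-n, ?_⟩
  have hθ0 : (0:ℝ) < θ := lt_trans one_pos hθ
  rw [zpow_neg, zpow_natCast]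
  exact inv_lt_of_inv_lt₀ hx hn

lemma exists_le_zpow {θ : ℝ} (hθ : 1 < θ) (x : ℝ) : ∃ k : ℤ, x ≤ θ ^ k := by
  obtain ⟨n, hn⟩ := pow_unbounded_of_one_lt x hθ
  exact ⟨n, by rw [zpow_natCast]; exact hn.le⟩

end Grid

section Classes

variable {M : Type*} [MetricSpace M]

open Classical in
/-- snapped distance: smallest grid power `θ^k` at least `dist x y` (0 on the diagonal). -/
noncomputable def tsnap (θ : ℝ) (x y : M) : ℝ :=
  if x = y then 0 else θ ^ (⌈Real.logb θ (dist x y)⌉)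

lemma dist_le_tsnap {θ : ℝ} (hθ : 1 < θ) (x y : M) : dist x y ≤ tsnap θ x y := by
  unfold tsnap
  by_cases h : x = y
  · simp [h]
  · rw [if_neg h]
    have hd : 0 < dist x y := dist_pos.mpr h
    have hθ0 : (0:ℝ) < θ := lt_trans one_pos hθ
    have h1 : dist x y = θ ^ (Real.logb θ (dist x y)) :=
      (Real.rpow_logb hθ0 hθ.ne' hd).symm
    have h2 : θ ^ (Real.logb θ (dist x y)) ≤ θ ^ ((⌈Real.logb θ (dist x y)⌉ : ℤ) : ℝ) := by
      apply Real.rpow_le_rpow_of_exponent_le hθ.le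
      exact Int.le_ceil _
    rw [Real.rpow_intCast] at h2
    linarith

lemma tsnap_le {θ : ℝ} (hθ : 1 < θ) {x y : M} {k : ℤ} (h : dist x y ≤ θ ^ k) :
    tsnap θ x y ≤ θ ^ k := by
  unfold tsnap
  by_cases hxy : x = y
  · rw [if_pos hxy]
    exact (zpow_pos (lt_trans one_pos hθ) k).le
  · rw [if_neg hxy]
    have hd : 0 < dist x y := dist_pos.mpr hxy
    have hceil : ⌈Real.logb θ (dist x y)⌉ ≤ k := by
      apply Int.ceil_le.mpr
      rw [show ((k : ℤ) : ℝ) = (k : ℝ) from rfl]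
      apply (Real.logb_le_iff_le_rpow hθ hd).mpr
      rwa [Real.rpow_intCast]
    exact zpow_le_zpow_right₀ hθ.le hceil

lemma rel_trans {M : Type*} [MetricSpace M]
    (hu : ∀ x y w : M, dist x w ≤ max (dist x y) (dist y w))
    {x y w : M} {r : ℝ} (h1 : dist x y ≤ r) (h2 : dist y w ≤ r) : dist x w ≤ r :=
  (hu x y w).trans (max_le h1 h2)

lemma tsnap_le_max {θ : ℝ} (hθ : 1 < θ)
    (hu : ∀ x y w : M, dist x w ≤ max (dist x y) (dist y w))
    {x y : M} (a : M) {k : ℤ} (hxy : dist x y ≤ θ ^ k) :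
    tsnap θ x a ≤ max (θ ^ k) (tsnap θ y a) := by
  have hda : dist x a ≤ max (θ ^ k) (tsnap θ y a) :=
    (hu x y a).trans (max_le_max hxy (dist_le_tsnap hθ y a))
  by_cases hya : y = a
  · have h0 : tsnap θ y a = 0 := by simp [tsnap, hya]
    rw [h0] at hda ⊢
    have : max (θ ^ k) 0 = θ ^ k := max_eq_left (zpow_pos (lt_trans one_pos hθ) k).le
    rw [this] at hda ⊢
    exact tsnap_le hθ hda
  · rcases le_total (tsnap θ y a) (θ ^ k) with h | h
    · rw [max_eq_left h] at hda
      exact le_max_of_le_left (tsnap_le hθ hda)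
    · rw [max_eq_right h] at hda
      have : tsnap θ y a = θ ^ (⌈Real.logb θ (dist y a)⌉) := by rw [tsnap, if_neg hya]
      rw [this] at hda
      refine le_max_of_le_right ?_
      rw [this]
      exact tsnap_le hθ hda

/-- `i` is the canonical (least-index) representative of its level-`k` class. -/
def act (θ : ℝ) (σ : ℕ → M) (k : ℤ) (i : ℕ) : Prop :=
  ∀ j, j < i → ¬ dist (σ j) (σ i) ≤ θ ^ k

open Classical in
/-- indicator that `x` lies in the level-`c.1` class represented by `σ c.2`. -/
noncomputable def chi (θ : ℝ) (σ : ℕ → M) (c : ℤ × ℕ) (x : M) : ℝ :=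
  if act θ σ c.1 c.2 ∧ dist (σ c.2) x ≤ θ ^ c.1 then 1 else 0

lemma chi_mem (θ : ℝ) (σ : ℕ → M) (c : ℤ × ℕ) (x : M) :
    chi θ σ c x = 0 ∨ chi θ σ c x = 1 := by
  unfold chi; split <;> simp

lemma act_unique (θ : ℝ) (σ : ℕ → M)
    (hu : ∀ x y w : M, dist x w ≤ max (dist x y) (dist y w))
    {k : ℤ} {i i' : ℕ} (hi : act θ σ k i) (hi' : act θ σ k i') {x : M}
    (h : dist (σ i) x ≤ θ ^ k) (h' : dist (σ i') x ≤ θ ^ k) : i = i' := by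
  rcases lt_trichotomy i i' with hlt | he | hlt
  · exact absurd (rel_trans hu h (by rwa [dist_comm] at h')) (hi' i hlt)
  · exact he
  · exact absurd (rel_trans hu h' (by rwa [dist_comm] at h)) (hi i' hlt)

end Classes

section CoreSum

variable {M : Type*} [MetricSpace M] {θ : ℝ} {σ : ℕ → M}

/-- if two points are within `θ^k` of each other, level-`k` indicators agree. -/
lemma chi_eq_of_close (hu : ∀ x y w : M, dist x w ≤ max (dist x y) (dist y w))
    {u v : M} {c : ℤ × ℕ} (h : dist u v ≤ θ ^ c.1) :
    chi θ σ c u = chi θ σ c v := by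
  classical
  have hiff : (act θ σ c.1 c.2 ∧ dist (σ c.2) u ≤ θ ^ c.1) ↔
      (act θ σ c.1 c.2 ∧ dist (σ c.2) v ≤ θ ^ c.1) := by
    refine and_congr_right fun _ => ⟨fun hr => rel_trans hu hr h,
      fun hr => rel_trans hu hr (by rwa [dist_comm])⟩
  unfold chi
  rw [if_congr hiff rfl rfl]

/-- Core estimate: every finite partial sum of weighted indicator differences is
bounded by `θ * dist u v`. -/
lemma chi_sum_le (hθ : 1 < θ)
    (hu : ∀ x y w : M, dist x w ≤ max (dist x y) (dist y w))
    (u v : M) (P : Finset (ℤ × ℕ)) :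
    ∑ c ∈ P, wgt θ c.1 * |chi θ σ c u - chi θ σ c v| ≤ θ * dist u v := by
  classical
  have hθ0 : (0:ℝ) < θ := lt_trans one_pos hθ
  set f : ℤ × ℕ → ℝ := fun c => wgt θ c.1 * |chi θ σ c u - chi θ σ c v| with hf
  set P' := P.filter (fun c => chi θ σ c u ≠ chi θ σ c v) with hP'
  have hres : ∑ c ∈ P, f c = ∑ c ∈ P', f c := by
    refine (Finset.sum_filter_of_ne fun c _ hne => ?_).symm
    intro hcontra
    apply hne
    rw [hf]; simp only
    rw [hcontra, sub_self, abs_zero, mul_zero]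
  rw [hres]
  -- each level appearing in `P'` is strictly below `dist u v`
  have hlevel : ∀ c ∈ P', θ ^ c.1 < dist u v := by
    intro c hc
    have hne : chi θ σ c u ≠ chi θ σ c v := (Finset.mem_filter.mp hc).2
    by_contra hcon
    push_neg at hcon
    exact hne (chi_eq_of_close hu hcon)
  -- bound each term by the weight
  have hterm : ∀ c ∈ P', f c ≤ wgt θ c.1 := by
    intro c _
    rw [hf]; simp only
    have h1 : |chi θ σ c u - chi θ σ c v| ≤ 1 := by
      rcases chi_mem θ σ c u with h | h <;> rcases chi_mem θ σ c v with h' | h' <;>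
        rw [h, h'] <;> norm_num
    nlinarith [wgt_pos hθ c.1]
  -- per-level fibers have at most two elements
  have hfiber : ∀ k : ℤ, (P'.filter (fun c => c.1 = k)).card ≤ 2 := by
    intro k
    have hiu : ∀ c ∈ P'.filter (fun c => c.1 = k), ∀ c' ∈ P'.filter (fun c => c.1 = k),
        ∀ x : M, dist (σ c.2) x ≤ θ ^ k → dist (σ c'.2) x ≤ θ ^ k →
          act θ σ k c.2 → act θ σ k c'.2 → c = c' := by
      intro c hc c' hc' x h h' ha ha'
      have h1 : c.1 = k := (Finset.mem_filter.mp hc).2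
      have h2 : c'.1 = k := (Finset.mem_filter.mp hc').2
      have : c.2 = c'.2 := act_unique θ σ hu ha ha' h h'
      exact Prod.ext (h1.trans h2.symm) this
    -- every element of the fiber satisfies `act` and is near `u` or near `v`
    have hQ : ∀ c ∈ P'.filter (fun c => c.1 = k),
        act θ σ k c.2 ∧ (dist (σ c.2) u ≤ θ ^ k ∨ dist (σ c.2) v ≤ θ ^ k) := by
      intro c hc
      obtain ⟨hcP', hck⟩ := Finset.mem_filter.mp hc
      have hne : chi θ σ c u ≠ chi θ σ c v := (Finset.mem_filter.mp hcP').2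
      rw [← hck]
      unfold chi at hne
      by_cases ha : act θ σ c.1 c.2
      · refine ⟨ha, ?_⟩
        by_cases h1 : dist (σ c.2) u ≤ θ ^ c.1
        · exact Or.inl h1
        · by_cases h2 : dist (σ c.2) v ≤ θ ^ c.1
          · exact Or.inr h2
          · exact absurd (by rw [if_neg (by tauto), if_neg (by tauto)]) hne
      · exact absurd (by rw [if_neg (by tauto), if_neg (by tauto)]) hne
    -- conclude the cardinality bound
    by_contra hcard
    push_neg at hcard
    obtain ⟨c₁, c₂, c₃, h₁, h₂, h₃, h12, h13, h23⟩ :=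
      Finset.two_lt_card_iff.mp (by omega : 2 < (P'.filter (fun c => c.1 = k)).card)
    obtain ⟨a₁, s₁⟩ := hQ c₁ h₁
    obtain ⟨a₂, s₂⟩ := hQ c₂ h₂
    obtain ⟨a₃, s₃⟩ := hQ c₃ h₃
    rcases s₁ with s₁ | s₁ <;> rcases s₂ with s₂ | s₂ <;> rcases s₃ with s₃ | s₃ <;>
      first
        | exact h12 (hiu c₁ h₁ c₂ h₂ _ s₁ s₂ a₁ a₂)
        | exact h13 (hiu c₁ h₁ c₃ h₃ _ s₁ s₃ a₁ a₃)
        | exact h23 (hiu c₂ h₂ c₃ h₃ _ s₂ s₃ a₂ a₃)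
  calc ∑ c ∈ P', f c ≤ ∑ c ∈ P', wgt θ c.1 := Finset.sum_le_sum hterm
    _ = ∑ k ∈ P'.image Prod.fst, ∑ c ∈ P'.filter (fun c => c.1 = k), wgt θ c.1 :=
        (Finset.sum_fiberwise_of_maps_to (fun c hc => Finset.mem_image_of_mem _ hc) _).symm
    _ ≤ ∑ k ∈ P'.image Prod.fst, (θ ^ (k+1) - θ ^ k) := by
        refine Finset.sum_le_sum fun k hk => ?_
        have hcongr : ∑ c ∈ P'.filter (fun c => c.1 = k), wgt θ c.1
            = ∑ _c ∈ P'.filter (fun c => c.1 = k), wgt θ k :=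
          Finset.sum_congr rfl (fun c hc => by rw [(Finset.mem_filter.mp hc).2])
        rw [hcongr, Finset.sum_const, nsmul_eq_mul, ← two_wgt θ k]
        have h2 := hfiber k
        have hw := (wgt_pos hθ k).le
        have : ((P'.filter (fun c => c.1 = k)).card : ℝ) ≤ 2 := by exact_mod_cast h2
        nlinarith
    _ ≤ θ * dist u v := by
        rcases (P'.image Prod.fst).eq_empty_or_nonempty with he | hne
        · rw [he, Finset.sum_empty]
          positivity
        · set m := (P'.image Prod.fst).max' hne with hm
          have hmlt : θ ^ m < dist u v := by
            obtain ⟨c, hc, hck⟩ := Finset.mem_image.mp ((P'.image Prod.fst).max'_mem hne)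
            have : m = c.1 := by rw [hm, hck]
            rw [this]
            exact hlevel c hc
          calc ∑ k ∈ P'.image Prod.fst, (θ ^ (k+1) - θ ^ k) ≤ θ ^ (m + 1) :=
                sum_zpow_sub_le hθ m _ (fun k hk => Finset.le_max' _ k hk)
            _ = θ * θ ^ m := by rw [zpow_add_one₀ (ne_of_gt hθ0)]; ring
            _ ≤ θ * dist u v := by nlinarith

end CoreSum

section SignFunctions

variable {M : Type*} [MetricSpace M] {θ : ℝ} {σ : ℕ → M}

lemma chi_abs_summable (hθ : 1 < θ)
    (hu : ∀ x y w : M, dist x w ≤ max (dist x y) (dist y w)) (u v : M) :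
    Summable (fun c : ℤ × ℕ => wgt θ c.1 * |chi θ σ c u - chi θ σ c v|) :=
  summable_of_sum_le
    (fun c => mul_nonneg (wgt_pos hθ c.1).le (abs_nonneg _))
    (chi_sum_le hθ hu u v)

lemma tsum_chi_abs_le (hθ : 1 < θ)
    (hu : ∀ x y w : M, dist x w ≤ max (dist x y) (dist y w)) (u v : M) :
    ∑' c : ℤ × ℕ, wgt θ c.1 * |chi θ σ c u - chi θ σ c v| ≤ θ * dist u v :=
  Summable.tsum_le_of_sum_le (chi_abs_summable hθ hu u v) (chi_sum_le hθ hu u v)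

/-- test function obtained from a sign pattern `ε` on the coordinates. -/
noncomputable def fEps (θ : ℝ) (σ : ℕ → M) (z : M) (ε : ℤ × ℕ → ℝ) (x : M) : ℝ :=
  ∑' c : ℤ × ℕ, wgt θ c.1 * ε c * (chi θ σ c x - chi θ σ c z)

variable {z : M} {ε : ℤ × ℕ → ℝ}

lemma fEps_term_abs_le (hθ : 1 < θ) (hε : ∀ c, |ε c| ≤ 1) (x : M) (c : ℤ × ℕ) :
    |wgt θ c.1 * ε c * (chi θ σ c x - chi θ σ c z)|
      ≤ wgt θ c.1 * |chi θ σ c x - chi θ σ c z| := by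
  rw [abs_mul, abs_mul, abs_of_nonneg (wgt_pos hθ c.1).le]
  have h4 := (wgt_pos hθ c.1).le
  calc wgt θ c.1 * |ε c| * |chi θ σ c x - chi θ σ c z|
      = (wgt θ c.1 * |chi θ σ c x - chi θ σ c z|) * |ε c| := by ring
    _ ≤ (wgt θ c.1 * |chi θ σ c x - chi θ σ c z|) * 1 :=
        mul_le_mul_of_nonneg_left (hε c) (mul_nonneg h4 (abs_nonneg _))
    _ = wgt θ c.1 * |chi θ σ c x - chi θ σ c z| := mul_one _

lemma fEps_abs_summable (hθ : 1 < θ)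
    (hu : ∀ x y w : M, dist x w ≤ max (dist x y) (dist y w))
    (hε : ∀ c, |ε c| ≤ 1) (x : M) :
    Summable (fun c : ℤ × ℕ => |wgt θ c.1 * ε c * (chi θ σ c x - chi θ σ c z)|) :=
  Summable.of_nonneg_of_le (fun _ => abs_nonneg _)
    (fEps_term_abs_le hθ hε x) (chi_abs_summable hθ hu x z)

lemma fEps_summable (hθ : 1 < θ)
    (hu : ∀ x y w : M, dist x w ≤ max (dist x y) (dist y w))
    (hε : ∀ c, |ε c| ≤ 1) (x : M) :
    Summable (fun c : ℤ × ℕ => wgt θ c.1 * ε c * (chi θ σ c x - chi θ σ c z)) :=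
  (fEps_abs_summable hθ hu hε x).of_abs

lemma fEps_apply_z : fEps θ σ z ε z = 0 := by
  unfold fEps
  convert tsum_zero with c
  rw [sub_self, mul_zero]

lemma fEps_diff_le (hθ : 1 < θ)
    (hu : ∀ x y w : M, dist x w ≤ max (dist x y) (dist y w))
    (hε : ∀ c, |ε c| ≤ 1) (x y : M) :
    |fEps θ σ z ε x - fEps θ σ z ε y| ≤ θ * dist x y := by
  unfold fEps
  rw [← Summable.tsum_sub (fEps_summable hθ hu hε x) (fEps_summable hθ hu hε y)]
  have hre : ∀ c : ℤ × ℕ,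
      wgt θ c.1 * ε c * (chi θ σ c x - chi θ σ c z)
        - wgt θ c.1 * ε c * (chi θ σ c y - chi θ σ c z)
      = wgt θ c.1 * ε c * (chi θ σ c x - chi θ σ c y) := fun c => by ring
  rw [tsum_congr hre]
  have h1 : |∑' c : ℤ × ℕ, wgt θ c.1 * ε c * (chi θ σ c x - chi θ σ c y)|
      ≤ ∑' c : ℤ × ℕ, |wgt θ c.1 * ε c * (chi θ σ c x - chi θ σ c y)| := by
    have hs : Summable (fun c : ℤ × ℕ => ‖wgt θ c.1 * ε c * (chi θ σ c x - chi θ σ c y)‖) := by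
      simpa only [Real.norm_eq_abs] using
        fEps_abs_summable (θ := θ) (σ := σ) (z := y) (ε := ε) hθ hu hε x
    have := norm_tsum_le_tsum_norm hs
    simpa only [Real.norm_eq_abs] using this
  refine h1.trans ?_
  refine le_trans (Summable.tsum_le_tsum (fEps_term_abs_le (z := y) hθ hε x)
    (fEps_abs_summable (z := y) hθ hu hε x) (chi_abs_summable hθ hu x y)) ?_
  exact tsum_chi_abs_le hθ hu x y

lemma fEps_feas (hθ : 1 < θ)
    (hu : ∀ x y w : M, dist x w ≤ max (dist x y) (dist y w))
    (hε : ∀ c, |ε c| ≤ 1) :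
    Feas z (fun x => θ⁻¹ * fEps θ σ z ε x) := by
  have hθ0 : (0:ℝ) < θ := lt_trans one_pos hθ
  constructor
  · show θ⁻¹ * fEps θ σ z ε z = 0
    rw [fEps_apply_z, mul_zero]
  · apply LipschitzWith.of_dist_le_mul
    intro x y
    rw [Real.dist_eq]
    have : θ⁻¹ * fEps θ σ z ε x - θ⁻¹ * fEps θ σ z ε y
        = θ⁻¹ * (fEps θ σ z ε x - fEps θ σ z ε y) := by ring
    rw [this, abs_mul, abs_of_nonneg (inv_nonneg.mpr hθ0.le)]
    have h2 := fEps_diff_le (σ := σ) (z := z) hθ hu hε x y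
    have h3 : θ⁻¹ * (θ * dist x y) = dist x y := by field_simp
    calc θ⁻¹ * |fEps θ σ z ε x - fEps θ σ z ε y| ≤ θ⁻¹ * (θ * dist x y) := by
          apply mul_le_mul_of_nonneg_left h2 (inv_nonneg.mpr hθ0.le)
      _ = dist x y := h3
      _ ≤ ↑(1:NNReal) * dist x y := by simp

/-- coordinates of a finitely supported measure. -/
noncomputable def gcoord (θ : ℝ) (σ : ℕ → M) (z : M) (ν : M →₀ ℝ) (c : ℤ × ℕ) : ℝ :=
  ∑ x ∈ ν.support, ν x * (chi θ σ c x - chi θ σ c z)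

lemma wgt_gcoord_le (hθ : 1 < θ) (ν : M →₀ ℝ) (c : ℤ × ℕ) :
    wgt θ c.1 * |gcoord θ σ z ν c|
      ≤ ∑ x ∈ ν.support, |ν x| * (wgt θ c.1 * |chi θ σ c x - chi θ σ c z|) := by
  unfold gcoord
  have h1 : |∑ x ∈ ν.support, ν x * (chi θ σ c x - chi θ σ c z)|
      ≤ ∑ x ∈ ν.support, |ν x| * |chi θ σ c x - chi θ σ c z| := by
    refine le_trans (Finset.abs_sum_le_sum_abs _ _) ?_
    refine Finset.sum_le_sum fun x _ => ?_
    rw [abs_mul]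
  calc wgt θ c.1 * |∑ x ∈ ν.support, ν x * (chi θ σ c x - chi θ σ c z)|
      ≤ wgt θ c.1 * ∑ x ∈ ν.support, |ν x| * |chi θ σ c x - chi θ σ c z| :=
        mul_le_mul_of_nonneg_left h1 (wgt_pos hθ c.1).le
    _ = ∑ x ∈ ν.support, |ν x| * (wgt θ c.1 * |chi θ σ c x - chi θ σ c z|) := by
        rw [Finset.mul_sum]
        exact Finset.sum_congr rfl fun x _ => by ring

lemma gcoord_abs_summable (hθ : 1 < θ)
    (hu : ∀ x y w : M, dist x w ≤ max (dist x y) (dist y w)) (ν : M →₀ ℝ) :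
    Summable (fun c : ℤ × ℕ => wgt θ c.1 * |gcoord θ σ z ν c|) := by
  refine Summable.of_nonneg_of_le
    (fun c => mul_nonneg (wgt_pos hθ c.1).le (abs_nonneg _))
    (fun c => wgt_gcoord_le hθ ν c) ?_
  exact summable_sum fun x _ => ((chi_abs_summable hθ hu x z).mul_left |ν x|)

/-- The pairing of `ν` against a sign-pattern test function. -/
lemma fpair_fEps (hθ : 1 < θ)
    (hu : ∀ x y w : M, dist x w ≤ max (dist x y) (dist y w))
    (hε : ∀ c, |ε c| ≤ 1) (ν : M →₀ ℝ) :
    fpair ν (fEps θ σ z ε) = ∑' c : ℤ × ℕ, wgt θ c.1 * ε c * gcoord θ σ z ν c := by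
  unfold fpair fEps
  calc ∑ x ∈ ν.support, ν x * ∑' c : ℤ × ℕ, wgt θ c.1 * ε c * (chi θ σ c x - chi θ σ c z)
      = ∑ x ∈ ν.support, ∑' c : ℤ × ℕ, ν x * (wgt θ c.1 * ε c * (chi θ σ c x - chi θ σ c z)) := by
        exact Finset.sum_congr rfl fun x _ => (tsum_mul_left).symm
    _ = ∑' c : ℤ × ℕ, ∑ x ∈ ν.support, ν x * (wgt θ c.1 * ε c * (chi θ σ c x - chi θ σ c z)) := by
        exact (Summable.tsum_finsetSum fun x _ => (fEps_summable hθ hu hε x).mul_left (ν x)).symm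
    _ = ∑' c : ℤ × ℕ, wgt θ c.1 * ε c * gcoord θ σ z ν c := by
        refine tsum_congr fun c => ?_
        unfold gcoord
        rw [Finset.mul_sum]
        exact Finset.sum_congr rfl fun x _ => by ring

lemma wgt_ge_summand_summable (hθ : 1 < θ)
    (hu : ∀ x y w : M, dist x w ≤ max (dist x y) (dist y w))
    (hε : ∀ c, |ε c| ≤ 1) (ν : M →₀ ℝ) :
    Summable (fun c : ℤ × ℕ => wgt θ c.1 * ε c * gcoord θ σ z ν c) := by
  apply Summable.of_abs
  refine Summable.of_nonneg_of_le (fun _ => abs_nonneg _) (fun c => ?_)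
    (gcoord_abs_summable (σ := σ) (z := z) hθ hu ν)
  rw [abs_mul, abs_mul, abs_of_nonneg (wgt_pos hθ c.1).le]
  have h4 := (wgt_pos hθ c.1).le
  calc wgt θ c.1 * |ε c| * |gcoord θ σ z ν c|
      = (wgt θ c.1 * |gcoord θ σ z ν c|) * |ε c| := by ring
    _ ≤ (wgt θ c.1 * |gcoord θ σ z ν c|) * 1 :=
        mul_le_mul_of_nonneg_left (hε c) (mul_nonneg h4 (abs_nonneg _))
    _ = wgt θ c.1 * |gcoord θ σ z ν c| := mul_one _

end SignFunctions

section NodeFunctions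

variable {M : Type*} [MetricSpace M] {θ : ℝ} {σ : ℕ → M}

open Classical in
/-- least-index representative of the level-`k` class of `x`. -/
noncomputable def idx (θ : ℝ) (σ : ℕ → M) (k : ℤ) (x : M) : ℕ :=
  if h : ∃ i, dist (σ i) x ≤ θ ^ k then Nat.find h else 0

lemma idx_exists (hθ : 1 < θ) {x : M} (hx : x ∈ Set.range σ) (k : ℤ) :
    ∃ i, dist (σ i) x ≤ θ ^ k := by
  obtain ⟨i, rfl⟩ := hx
  exact ⟨i, by simp [(zpow_pos (lt_trans one_pos hθ) k).le]⟩

lemma idx_spec (hθ : 1 < θ) {x : M} (hx : x ∈ Set.range σ) (k : ℤ) :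
    dist (σ (idx θ σ k x)) x ≤ θ ^ k := by
  classical
  have h := idx_exists hθ hx k
  rw [idx, dif_pos h]
  exact Nat.find_spec h

lemma idx_act (hθ : 1 < θ)
    (hu : ∀ x y w : M, dist x w ≤ max (dist x y) (dist y w))
    {x : M} (hx : x ∈ Set.range σ) (k : ℤ) :
    act θ σ k (idx θ σ k x) := by
  classical
  have h := idx_exists hθ hx k
  rw [idx, dif_pos h]
  intro j hj hrel
  exact Nat.find_min h hj (rel_trans hu hrel (Nat.find_spec h))

lemma idx_eq (hθ : 1 < θ)
    (hu : ∀ x y w : M, dist x w ≤ max (dist x y) (dist y w))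
    {x : M} (hx : x ∈ Set.range σ) {k : ℤ} {i : ℕ}
    (hact : act θ σ k i) (hrel : dist (σ i) x ≤ θ ^ k) :
    idx θ σ k x = i :=
  act_unique θ σ hu (idx_act hθ hu hx k) hact (idx_spec hθ hx k) hrel

/-- discrete McShane extension to the "nodes" of the hierarchy. -/
noncomputable def Fnd (θ : ℝ) (f : M → ℝ) (A : Finset M) (hA : A.Nonempty)
    (x : M) (k : ℤ) : ℝ :=
  A.sup' hA (fun a => f a - max (θ ^ k) (tsnap θ x a)) + θ ^ k / 2

lemma Fnd_congr (hθ : 1 < θ)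
    (hu : ∀ x y w : M, dist x w ≤ max (dist x y) (dist y w))
    {f : M → ℝ} {A : Finset M} {hA : A.Nonempty} {x y : M} {k : ℤ}
    (h : dist x y ≤ θ ^ k) : Fnd θ f A hA x k = Fnd θ f A hA y k := by
  unfold Fnd
  congr 1
  refine Finset.sup'_congr hA rfl fun a _ => ?_
  have h1 : tsnap θ x a ≤ max (θ ^ k) (tsnap θ y a) := tsnap_le_max hθ hu a h
  have h2 : tsnap θ y a ≤ max (θ ^ k) (tsnap θ x a) :=
    tsnap_le_max hθ hu a (by rwa [dist_comm])
  have hmax : max (θ ^ k) (tsnap θ x a) = max (θ ^ k) (tsnap θ y a) :=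
    le_antisymm (max_le (le_max_left _ _) h1) (max_le (le_max_left _ _) h2)
  rw [hmax]

lemma Fnd_step_abs (hθ : 1 < θ) (f : M → ℝ) (A : Finset M) (hA : A.Nonempty)
    (x : M) (k : ℤ) :
    |Fnd θ f A hA x (k + 1) - Fnd θ f A hA x k| ≤ wgt θ k := by
  have hθ0 : (0:ℝ) < θ := lt_trans one_pos hθ
  set d : ℝ := θ ^ (k+1) - θ ^ k with hd
  have hd0 : 0 ≤ d := by
    have := zpow_lt_zpow_right₀ hθ (lt_add_one k); rw [hd]; linarith
  set g1 : M → ℝ := fun a => f a - max (θ ^ (k+1)) (tsnap θ x a) with hg1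
  set g2 : M → ℝ := fun a => f a - max (θ ^ k) (tsnap θ x a) with hg2
  have hle : ∀ a : M, g1 a ≤ g2 a ∧ g2 a ≤ g1 a + d := by
    intro a
    have hmono : max (θ ^ k) (tsnap θ x a) ≤ max (θ ^ (k+1)) (tsnap θ x a) :=
      max_le_max (by rw [hd] at hd0; linarith) le_rfl
    have hup : max (θ ^ (k+1)) (tsnap θ x a) ≤ max (θ ^ k) (tsnap θ x a) + d := by
      refine max_le ?_ ?_
      · have := le_max_left (θ ^ k) (tsnap θ x a); rw [hd]; linarith
      · have := le_max_right (θ ^ k) (tsnap θ x a); linarith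
    constructor
    · rw [hg1, hg2]; simp only; linarith
    · rw [hg1, hg2]; simp only; linarith
  have hs1 : A.sup' hA g1 ≤ A.sup' hA g2 :=
    Finset.sup'_le hA g1 fun a ha => (hle a).1.trans (Finset.le_sup' g2 ha)
  have hs2 : A.sup' hA g2 ≤ A.sup' hA g1 + d :=
    Finset.sup'_le hA g2 fun a ha =>
      (hle a).2.trans (add_le_add_left (Finset.le_sup' g1 ha) d)
  have hFnd1 : Fnd θ f A hA x (k+1) = A.sup' hA g1 + θ ^ (k+1) / 2 := rfl
  have hFnd2 : Fnd θ f A hA x k = A.sup' hA g2 + θ ^ k / 2 := rfl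
  rw [hFnd1, hFnd2, abs_le]
  unfold wgt
  constructor <;> [skip; skip] <;> rw [hd] at hs2 hd0 <;> try linarith
  all_goals linarith

lemma Fnd_close (hθ : 1 < θ) {f : M → ℝ} {A : Finset M} {hA : A.Nonempty}
    (hflip : ∀ a b : M, f a - f b ≤ dist a b) {x : M} (hx : x ∈ A) (k : ℤ) :
    |Fnd θ f A hA x k - f x| ≤ θ ^ k / 2 := by
  have hθ0 : (0:ℝ) < θ := lt_trans one_pos hθ
  have hup : A.sup' hA (fun a => f a - max (θ ^ k) (tsnap θ x a)) ≤ f x := by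
    refine Finset.sup'_le hA _ fun a _ => ?_
    have h1 : f a - f x ≤ dist a x := hflip a x
    have h2 : dist a x ≤ tsnap θ x a := by
      rw [dist_comm]; exact dist_le_tsnap hθ x a
    have h3 : tsnap θ x a ≤ max (θ ^ k) (tsnap θ x a) := le_max_right _ _
    linarith
  have hlo : f x - θ ^ k ≤ A.sup' hA (fun a => f a - max (θ ^ k) (tsnap θ x a)) := by
    have h0 : tsnap θ x x = 0 := by simp [tsnap]
    have h1 : (fun a => f a - max (θ ^ k) (tsnap θ x a)) x = f x - θ ^ k := by
      simp only [h0]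
      rw [max_eq_left (zpow_pos hθ0 k).le]
    calc f x - θ ^ k = (fun a => f a - max (θ ^ k) (tsnap θ x a)) x := h1.symm
      _ ≤ _ := Finset.le_sup' (fun a => f a - max (θ ^ k) (tsnap θ x a)) hx
  rw [abs_le]
  unfold Fnd
  constructor <;> linarith

end NodeFunctions

section L2

variable {M : Type*} [MetricSpace M] {θ : ℝ} {σ : ℕ → M} {z : M}

/-- The key lower bound: the weighted ℓ¹ mass of the coordinates dominates
every pairing against a feasible function, hence the free norm. -/
lemma fpair_le_tsum_gcoord (hθ : 1 < θ)
    (hu : ∀ x y w : M, dist x w ≤ max (dist x y) (dist y w))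
    (hz : z ∈ Set.range σ) (ν : M →₀ ℝ)
    (hsupp : ∀ x ∈ ν.support, x ∈ Set.range σ)
    {f : M → ℝ} (hf0 : f z = 0) (hlip : LipschitzWith 1 f) :
    fpair ν f ≤ ∑' c : ℤ × ℕ, wgt θ c.1 * |gcoord θ σ z ν c| := by
  classical
  have hθ0 : (0:ℝ) < θ := lt_trans one_pos hθ
  set G := ∑' c : ℤ × ℕ, wgt θ c.1 * |gcoord θ σ z ν c| with hG
  set T := ∑ x ∈ ν.support, |ν x| with hT
  have hT0 : 0 ≤ T := Finset.sum_nonneg fun x _ => abs_nonneg _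
  have hflip : ∀ a b : M, f a - f b ≤ dist a b := by
    intro a b
    have h := hlip.dist_le_mul a b
    rw [Real.dist_eq, NNReal.coe_one, one_mul] at h
    exact (le_abs_self _).trans h
  set A : Finset M := insert z ν.support with hA
  have hAne : A.Nonempty := ⟨z, Finset.mem_insert_self z _⟩
  have hzA : z ∈ A := Finset.mem_insert_self z _
  have hAr : ∀ a ∈ A, a ∈ Set.range σ := by
    intro a ha
    rcases Finset.mem_insert.mp ha with rfl | ha'
    · exact hz
    · exact hsupp a ha'
  set Φ : M → ℤ → ℝ := fun x k => Fnd θ f A hAne x k with hΦ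
  -- the per-level grouping bound
  have hB : ∀ k : ℤ,
      -(∑ x ∈ ν.support, ν x * ((Φ x (k+1) - Φ x k) - (Φ z (k+1) - Φ z k)))
        ≤ ∑ i ∈ A.image (fun a => idx θ σ k a), wgt θ k * |gcoord θ σ z ν (k, i)| := by
    intro k
    set Tk := A.image (fun a => idx θ σ k a) with hTk
    have hone : ∀ x ∈ A,
        ∑ i ∈ Tk, (Φ (σ i) (k+1) - Φ (σ i) k) * chi θ σ (k, i) x
          = Φ x (k+1) - Φ x k := by
      intro x hxA
      have hxr : x ∈ Set.range σ := hAr x hxA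
      rw [Finset.sum_eq_single (idx θ σ k x)]
      · have hch : chi θ σ (k, idx θ σ k x) x = 1 := by
          unfold chi
          rw [if_pos ⟨idx_act hθ hu hxr k, idx_spec hθ hxr k⟩]
        rw [hch, mul_one]
        have hc1 : Φ (σ (idx θ σ k x)) k = Φ x k :=
          Fnd_congr hθ hu (idx_spec hθ hxr k)
        have hc2 : Φ (σ (idx θ σ k x)) (k+1) = Φ x (k+1) :=
          Fnd_congr hθ hu ((idx_spec hθ hxr k).trans
            (zpow_le_zpow_right₀ hθ.le (by omega)))
        rw [hc1, hc2]
      · intro i _ hne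
        have hch : chi θ σ (k, i) x = 0 := by
          unfold chi
          rw [if_neg]
          rintro ⟨hact, hrel⟩
          exact hne (idx_eq hθ hu hxr hact hrel).symm
        rw [hch, mul_zero]
      · intro habs
        exact absurd (Finset.mem_image.mpr ⟨x, hxA, rfl⟩) habs
    have hiden : ∑ x ∈ ν.support, ν x * ((Φ x (k+1) - Φ x k) - (Φ z (k+1) - Φ z k))
        = ∑ i ∈ Tk, (Φ (σ i) (k+1) - Φ (σ i) k) * gcoord θ σ z ν (k, i) := by
      have hrhs : ∀ i ∈ Tk, (Φ (σ i) (k+1) - Φ (σ i) k) * gcoord θ σ z ν (k, i)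
          = ∑ x ∈ ν.support, ν x * ((Φ (σ i) (k+1) - Φ (σ i) k) * (chi θ σ (k,i) x - chi θ σ (k,i) z)) := by
        intro i _
        unfold gcoord
        rw [Finset.mul_sum]
        exact Finset.sum_congr rfl fun x _ => by ring
      rw [Finset.sum_congr rfl hrhs, Finset.sum_comm]
      refine Finset.sum_congr rfl fun x hx => ?_
      have hxA : x ∈ A := Finset.mem_insert_of_mem hx
      have h1 : ∑ i ∈ Tk, ν x * ((Φ (σ i) (k+1) - Φ (σ i) k) * (chi θ σ (k,i) x - chi θ σ (k,i) z))
          = ν x * ((∑ i ∈ Tk, (Φ (σ i) (k+1) - Φ (σ i) k) * chi θ σ (k,i) x)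
              - (∑ i ∈ Tk, (Φ (σ i) (k+1) - Φ (σ i) k) * chi θ σ (k,i) z)) := by
        rw [← Finset.sum_sub_distrib, Finset.mul_sum]
        exact Finset.sum_congr rfl fun i _ => by ring
      rw [h1, hone x hxA, hone z hzA]
    rw [hiden]
    calc -(∑ i ∈ Tk, (Φ (σ i) (k+1) - Φ (σ i) k) * gcoord θ σ z ν (k, i))
        ≤ |∑ i ∈ Tk, (Φ (σ i) (k+1) - Φ (σ i) k) * gcoord θ σ z ν (k, i)| := neg_le_abs _
      _ ≤ ∑ i ∈ Tk, |(Φ (σ i) (k+1) - Φ (σ i) k) * gcoord θ σ z ν (k, i)| :=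
          Finset.abs_sum_le_sum_abs _ _
      _ ≤ ∑ i ∈ Tk, wgt θ k * |gcoord θ σ z ν (k, i)| := by
          refine Finset.sum_le_sum fun i _ => ?_
          rw [abs_mul]
          exact mul_le_mul_of_nonneg_right (Fnd_step_abs hθ f A hAne (σ i) k) (abs_nonneg _)
  -- the main truncated estimate
  have key : ∀ k₀ : ℤ, fpair ν f ≤ G + θ ^ k₀ * T := by
    intro k₀
    obtain ⟨k₁, hk₁⟩ := exists_le_zpow hθ
      ((A ×ˢ A).sup' (hAne.product hAne) fun p => dist p.1 p.2)
    set K1 := max k₁ k₀ with hK1def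
    have hdiam : ∀ x ∈ A, ∀ y ∈ A, dist x y ≤ θ ^ K1 := by
      intro x hx y hy
      have h1 : dist x y ≤ (A ×ˢ A).sup' (hAne.product hAne) (fun p => dist p.1 p.2) :=
        Finset.le_sup' (f := fun p : M × M => dist p.1 p.2) (b := (x, y))
          (Finset.mem_product.mpr ⟨hx, hy⟩)
      exact h1.trans (hk₁.trans (zpow_le_zpow_right₀ hθ.le (le_max_left _ _)))
    have hk0K : k₀ ≤ K1 := le_max_right _ _
    set N := (K1 - k₀).toNat with hN
    have hK1N : k₀ + (N : ℤ) = K1 := by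
      rw [hN, Int.toNat_of_nonneg (by omega)]; ring
    have hsum_x : ∀ x : M,
        ∑ j ∈ Finset.range N, (Φ x (k₀ + (j:ℤ) + 1) - Φ x (k₀ + (j:ℤ)))
          = Φ x K1 - Φ x k₀ := by
      intro x
      have h := Finset.sum_range_sub (fun j : ℕ => Φ x (k₀ + (j:ℤ))) N
      have hcongr : ∀ j ∈ Finset.range N,
          Φ x (k₀ + ((j:ℕ)+1 : ℕ)) - Φ x (k₀ + (j:ℤ))
            = Φ x (k₀ + (j:ℤ) + 1) - Φ x (k₀ + (j:ℤ)) := by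
        intro j _
        have : (k₀ + ((j:ℕ)+1 : ℕ) : ℤ) = k₀ + (j:ℤ) + 1 := by push_cast; ring
        rw [this]
      rw [Finset.sum_congr rfl hcongr] at h
      rw [h, hK1N]
      simp
    have hPhiK1 : ∀ x ∈ A, Φ x K1 = Φ z K1 := fun x hx =>
      Fnd_congr hθ hu (hdiam x hx z hzA)
    -- pointwise decomposition
    have hx_eq : ∀ x ∈ ν.support, ν x * f x
        = ν x * ((f x - Φ x k₀) - (f z - Φ z k₀))
          - ∑ j ∈ Finset.range N, ν x * ((Φ x (k₀+(j:ℤ)+1) - Φ x (k₀+(j:ℤ)))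
              - (Φ z (k₀+(j:ℤ)+1) - Φ z (k₀+(j:ℤ)))) := by
      intro x hx
      have hxA : x ∈ A := Finset.mem_insert_of_mem hx
      have h3 := hsum_x x
      have h4 := hsum_x z
      have h5 := hPhiK1 x hxA
      have hfx : f x = ((f x - Φ x k₀) - (f z - Φ z k₀))
          - ∑ j ∈ Finset.range N, ((Φ x (k₀+(j:ℤ)+1) - Φ x (k₀+(j:ℤ)))
              - (Φ z (k₀+(j:ℤ)+1) - Φ z (k₀+(j:ℤ)))) := by
        rw [Finset.sum_sub_distrib, h3, h4]
        rw [hf0] at *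
        linarith
      calc ν x * f x = ν x * (((f x - Φ x k₀) - (f z - Φ z k₀))
          - ∑ j ∈ Finset.range N, ((Φ x (k₀+(j:ℤ)+1) - Φ x (k₀+(j:ℤ)))
              - (Φ z (k₀+(j:ℤ)+1) - Φ z (k₀+(j:ℤ))))) := by rw [← hfx]
        _ = _ := by rw [mul_sub, Finset.mul_sum]
    have hmain : fpair ν f
        = (∑ x ∈ ν.support, ν x * ((f x - Φ x k₀) - (f z - Φ z k₀)))
          - ∑ j ∈ Finset.range N, ∑ x ∈ ν.support,
              ν x * ((Φ x (k₀+(j:ℤ)+1) - Φ x (k₀+(j:ℤ)))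
                - (Φ z (k₀+(j:ℤ)+1) - Φ z (k₀+(j:ℤ)))) := by
      unfold fpair
      rw [Finset.sum_congr rfl hx_eq, Finset.sum_sub_distrib, Finset.sum_comm]
    -- bound the boundary term
    have hE : ∑ x ∈ ν.support, ν x * ((f x - Φ x k₀) - (f z - Φ z k₀)) ≤ θ ^ k₀ * T := by
      have hle : ∀ x ∈ ν.support, ν x * ((f x - Φ x k₀) - (f z - Φ z k₀)) ≤ |ν x| * θ ^ k₀ := by
        intro x hx
        have hxA : x ∈ A := Finset.mem_insert_of_mem hx
        have h1 := Fnd_close (hA := hAne) hθ hflip hxA k₀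
        have h2 := Fnd_close (hA := hAne) hθ hflip hzA k₀
        rw [abs_le] at h1 h2
        have habs : |(f x - Φ x k₀) - (f z - Φ z k₀)| ≤ θ ^ k₀ := by
          rw [abs_le]
          constructor <;> [skip; skip] <;>
            · obtain ⟨h1a, h1b⟩ := h1; obtain ⟨h2a, h2b⟩ := h2; linarith
        calc ν x * ((f x - Φ x k₀) - (f z - Φ z k₀))
            ≤ |ν x * ((f x - Φ x k₀) - (f z - Φ z k₀))| := le_abs_self _
          _ = |ν x| * |(f x - Φ x k₀) - (f z - Φ z k₀)| := abs_mul _ _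
          _ ≤ |ν x| * θ ^ k₀ := mul_le_mul_of_nonneg_left habs (abs_nonneg _)
      calc ∑ x ∈ ν.support, ν x * ((f x - Φ x k₀) - (f z - Φ z k₀))
          ≤ ∑ x ∈ ν.support, |ν x| * θ ^ k₀ := Finset.sum_le_sum hle
        _ = θ ^ k₀ * T := by
            rw [hT, Finset.mul_sum]
            exact Finset.sum_congr rfl fun x _ => by ring
    -- bound the level sums by the ℓ¹ mass
    have hstep2 : ∑ j ∈ Finset.range N,
        -(∑ x ∈ ν.support, ν x * ((Φ x (k₀+(j:ℤ)+1) - Φ x (k₀+(j:ℤ)))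
            - (Φ z (k₀+(j:ℤ)+1) - Φ z (k₀+(j:ℤ)))))
        ≤ ∑ j ∈ Finset.range N, ∑ i ∈ A.image (fun a => idx θ σ (k₀+(j:ℤ)) a),
            wgt θ (k₀+(j:ℤ)) * |gcoord θ σ z ν (k₀+(j:ℤ), i)| :=
      Finset.sum_le_sum fun j _ => hB (k₀ + (j:ℤ))
    set P : Finset (ℤ × ℕ) := (Finset.range N).biUnion
        (fun j => (A.image (fun a => idx θ σ (k₀+(j:ℤ)) a)).image
          (fun i => ((k₀+(j:ℤ), i) : ℤ × ℕ))) with hP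
    have hPsum : ∑ j ∈ Finset.range N, ∑ i ∈ A.image (fun a => idx θ σ (k₀+(j:ℤ)) a),
        wgt θ (k₀+(j:ℤ)) * |gcoord θ σ z ν (k₀+(j:ℤ), i)|
        = ∑ c ∈ P, wgt θ c.1 * |gcoord θ σ z ν c| := by
      rw [hP, Finset.sum_biUnion]
      · refine Finset.sum_congr rfl fun j _ => ?_
        rw [Finset.sum_image (fun i _ i' _ h => congrArg Prod.snd h)]
      · intro j _ j' _ hjj'
        refine Finset.disjoint_left.mpr fun c hc hc' => ?_
        obtain ⟨i, _, rfl⟩ := Finset.mem_image.mp hc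
        obtain ⟨i', _, hcc⟩ := Finset.mem_image.mp hc'
        apply hjj'
        have := congrArg Prod.fst hcc
        simp only at this
        omega
    have hPle : ∑ c ∈ P, wgt θ c.1 * |gcoord θ σ z ν c| ≤ G :=
      Summable.sum_le_tsum P (fun c _ => mul_nonneg (wgt_pos hθ c.1).le (abs_nonneg _))
        (gcoord_abs_summable hθ hu ν)
    have hneg : -(∑ j ∈ Finset.range N, ∑ x ∈ ν.support,
        ν x * ((Φ x (k₀+(j:ℤ)+1) - Φ x (k₀+(j:ℤ))) - (Φ z (k₀+(j:ℤ)+1) - Φ z (k₀+(j:ℤ)))))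
        = ∑ j ∈ Finset.range N,
          -(∑ x ∈ ν.support, ν x * ((Φ x (k₀+(j:ℤ)+1) - Φ x (k₀+(j:ℤ)))
            - (Φ z (k₀+(j:ℤ)+1) - Φ z (k₀+(j:ℤ))))) := by
      rw [Finset.sum_neg_distrib]
    rw [hmain]
    have hcomb := hstep2.trans (le_of_eq hPsum) |>.trans hPle
    rw [← hneg] at hcomb
    linarith
  -- conclude by letting `k₀ → -∞`
  by_contra hcon
  push_neg at hcon
  rcases hT0.eq_or_lt with hTeq | hTpos
  · have h := key 0
    rw [← hTeq, mul_zero, add_zero] at h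
    linarith
  · obtain ⟨k, hk⟩ := exists_zpow_lt hθ (div_pos (by linarith : (0:ℝ) < fpair ν f - G) hTpos)
    have h := key k
    have h2 : θ ^ k * T < fpair ν f - G := (lt_div_iff₀ hTpos).mp hk
    linarith

lemma freeNorm_le_tsum_gcoord (hθ : 1 < θ)
    (hu : ∀ x y w : M, dist x w ≤ max (dist x y) (dist y w))
    (hz : z ∈ Set.range σ) (ν : M →₀ ℝ)
    (hsupp : ∀ x ∈ ν.support, x ∈ Set.range σ) :
    freeNorm z ν ≤ ∑' c : ℤ × ℕ, wgt θ c.1 * |gcoord θ σ z ν c| :=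
  freeNorm_le_of_forall fun f hf =>
    fpair_le_tsum_gcoord hθ hu hz ν hsupp hf.1 hf.2

end L2

section SignHelpers

open Classical in
/-- a sign function. -/
noncomputable def sg (r : ℝ) : ℝ := if r < 0 then -1 else 1

lemma sg_abs_le (r : ℝ) : |sg r| ≤ 1 := by
  unfold sg; split <;> simp

lemma sg_mul_self (r : ℝ) : sg r * r = |r| := by
  unfold sg
  split
  · rw [abs_of_neg (by assumption)]; ring
  · rw [abs_of_nonneg (by linarith [not_lt.mp (by assumption)])]; ring

lemma sg_mul_ge (s t : ℝ) : |t| - 2 * |t - s| ≤ sg s * t := by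
  unfold sg
  split
  · rcases le_or_gt 0 t with h | h
    · rw [abs_of_nonneg h]
      have h2 : t - s > 0 := by linarith
      rw [abs_of_pos h2]
      linarith
    · rw [abs_of_neg h]
      have h3 : |t - s| ≥ 0 := abs_nonneg _
      linarith
  · have hs : 0 ≤ s := by linarith [not_lt.mp (by assumption)]
    rcases le_or_gt 0 t with h | h
    · rw [abs_of_nonneg h]
      have h3 : |t - s| ≥ 0 := abs_nonneg _
      linarith
    · rw [abs_of_neg h]
      have h2 : |t - s| ≥ s - t := neg_le_abs _ |>.trans' (by rw [neg_sub])
      linarith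

end SignHelpers

section UpperBounds

variable {M : Type*} [MetricSpace M] {θ : ℝ} {σ : ℕ → M} {z : M}

/-- finite partial sums of the weighted coordinates are controlled by the dual bound. -/
lemma sum_wgt_gcoord_le (hθ : 1 < θ)
    (hu : ∀ x y w : M, dist x w ≤ max (dist x y) (dist y w))
    (ν : M →₀ ℝ) {B : ℝ} (hb : ∀ f : M → ℝ, Feas z f → |fpair ν f| ≤ B)
    (F : Finset (ℤ × ℕ)) :
    ∑ c ∈ F, wgt θ c.1 * |gcoord θ σ z ν c| ≤ θ * B := by
  classical
  have hθ0 : (0:ℝ) < θ := lt_trans one_pos hθ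
  set ε : ℤ × ℕ → ℝ := fun c => if c ∈ F then sg (gcoord θ σ z ν c) else 0 with hε
  have hε1 : ∀ c, |ε c| ≤ 1 := by
    intro c; rw [hε]; simp only
    split
    · exact sg_abs_le _
    · simp
  have hps := fpair_fEps (σ := σ) (z := z) hθ hu hε1 ν
  have hts : ∑' c : ℤ × ℕ, wgt θ c.1 * ε c * gcoord θ σ z ν c
      = ∑ c ∈ F, wgt θ c.1 * |gcoord θ σ z ν c| := by
    rw [tsum_eq_sum (s := F) (fun c hc => by rw [hε]; simp only [if_neg hc]; ring)]
    refine Finset.sum_congr rfl fun c hc => ?_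
    rw [hε]; simp only [if_pos hc]
    rw [mul_assoc, sg_mul_self]
  have hfeas := fEps_feas (σ := σ) (z := z) hθ hu hε1
  have hple := hb _ hfeas
  have heq : fpair ν (fun x => θ⁻¹ * fEps θ σ z ε x) = θ⁻¹ * fpair ν (fEps θ σ z ε) :=
    fpair_smul_fun ν _ _
  rw [heq] at hple
  have h2 : fpair ν (fEps θ σ z ε) = ∑ c ∈ F, wgt θ c.1 * |gcoord θ σ z ν c| := by
    rw [hps, hts]
  rw [h2] at hple
  have h3 : θ⁻¹ * (∑ c ∈ F, wgt θ c.1 * |gcoord θ σ z ν c|) ≤ B := (le_abs_self _).trans hple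
  calc ∑ c ∈ F, wgt θ c.1 * |gcoord θ σ z ν c|
      = θ * (θ⁻¹ * ∑ c ∈ F, wgt θ c.1 * |gcoord θ σ z ν c|) := by field_simp
    _ ≤ θ * B := mul_le_mul_of_nonneg_left h3 hθ0.le

end UpperBounds


/-- The Lipschitz-free space over an ultrametric space is `1`-Schur. -/
theorem freeSpace_one_schur_of_ultrametric
    {M : Type*} [MetricSpace M] (z : M)
    (hultra : ∀ x y w : M, dist x w ≤ max (dist x y) (dist y w))
    (μ : ℕ → M →₀ ℝ) (hbdd : ∃ C : ℝ, ∀ n, freeNorm z (μ n) ≤ C) :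
    seqCa z μ ≤ seqDe z μ := by

  classical
  obtain ⟨C, hC⟩ := hbdd
  have hC0 : 0 ≤ C := le_trans (freeNorm_nonneg z (μ 0)) (hC 0)
  -- pairings with differences are uniformly bounded
  have hpair2C : ∀ (f : M → ℝ), Feas z f → ∀ k l : ℕ, |fpair (μ k - μ l) f| ≤ 2*C := by
    intro f hf k l
    rw [fpair_sub]
    calc |fpair (μ k) f - fpair (μ l) f| ≤ |fpair (μ k) f| + |fpair (μ l) f| :=
          abs_sub _ _
      _ ≤ C + C := add_le_add ((abs_fpair_le_freeNorm hf _).trans (hC k))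
          ((abs_fpair_le_freeNorm hf _).trans (hC l))
      _ = 2*C := by ring
  -- the inner sets of `seqDe`
  set Iset : (M → ℝ) → ℕ → Set ℝ := fun f n =>
    {s | ∃ k, n ≤ k ∧ ∃ l, n ≤ l ∧ s = |∑ x ∈ (μ k - μ l).support, (μ k - μ l) x * f x|}
    with hIset
  set Uset : (M → ℝ) → Set ℝ := fun f => {u | ∃ n : ℕ, u = sSup (Iset f n)} with hUset
  set Dset : Set ℝ := {t | ∃ f : M → ℝ, f z = 0 ∧ LipschitzWith 1 f ∧ t = sInf (Uset f)}
    with hDset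
  have hDe : seqDe z μ = sSup Dset := rfl
  have hI0 : ∀ f n, (0:ℝ) ∈ Iset f n := by
    intro f n
    exact ⟨n, le_rfl, n, le_rfl, by simp⟩
  have hIle : ∀ (f : M → ℝ), Feas z f → ∀ n, ∀ s ∈ Iset f n, s ≤ 2*C := by
    rintro f hf n s ⟨k, _, l, _, rfl⟩
    exact hpair2C f hf k l
  have hIbdd : ∀ (f : M → ℝ), Feas z f → ∀ n, BddAbove (Iset f n) := fun f hf n =>
    ⟨2*C, fun s hs => hIle f hf n s hs⟩
  have hIsup0 : ∀ (f : M → ℝ), Feas z f → ∀ n, 0 ≤ sSup (Iset f n) := fun f hf n =>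
    le_csSup (hIbdd f hf n) (hI0 f n)
  have hIsup2C : ∀ (f : M → ℝ), Feas z f → ∀ n, sSup (Iset f n) ≤ 2*C := fun f hf n =>
    csSup_le ⟨0, hI0 f n⟩ (hIle f hf n)
  have hUne : ∀ f, (Uset f).Nonempty := fun f => ⟨sSup (Iset f 0), 0, rfl⟩
  have hUbdd : ∀ (f : M → ℝ), Feas z f → BddBelow (Uset f) := by
    rintro f hf
    refine ⟨0, ?_⟩
    rintro u ⟨n, rfl⟩
    exact hIsup0 f hf n
  have hDbdd : BddAbove Dset := by
    refine ⟨2*C, ?_⟩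
    rintro t ⟨f, hf0, hfl, rfl⟩
    exact (csInf_le (hUbdd f ⟨hf0, hfl⟩) ⟨0, rfl⟩).trans (hIsup2C f ⟨hf0, hfl⟩ 0)
  have hzfeas : Feas z (fun _ : M => (0:ℝ)) := by
    refine ⟨rfl, ?_⟩
    apply LipschitzWith.of_dist_le_mul
    intro x y; simp [dist_nonneg]
  have hD0 : (0:ℝ) ∈ Dset := by
    refine ⟨fun _ => 0, rfl, hzfeas.2, ?_⟩
    have hIz : ∀ n, Iset (fun _ => 0) n = {0} := by
      intro n
      ext s
      constructor
      · rintro ⟨k, _, l, _, rfl⟩; simp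
      · rintro rfl; exact hI0 _ n
    have hUz : Uset (fun _ => 0) = {0} := by
      ext u
      constructor
      · rintro ⟨n, rfl⟩; rw [hIz n, csSup_singleton]; rfl
      · rintro rfl; exact ⟨0, by rw [hIz 0, csSup_singleton]⟩
    rw [hUz, csInf_singleton]
  have hde0 : 0 ≤ seqDe z μ := by rw [hDe]; exact le_csSup hDbdd hD0
  have hde2C : seqDe z μ ≤ 2*C := by
    rw [hDe]
    refine csSup_le ⟨0, hD0⟩ ?_
    rintro t ⟨f, hf0, hfl, rfl⟩
    exact (csInf_le (hUbdd f ⟨hf0, hfl⟩) ⟨0, rfl⟩).trans (hIsup2C f ⟨hf0, hfl⟩ 0)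
  -- the `seqCa` sets
  set Sset : ℕ → Set ℝ := fun n =>
    {s | ∃ k, n ≤ k ∧ ∃ l, n ≤ l ∧ s = freeNorm z (μ k - μ l)} with hSset
  have hCa : seqCa z μ = sInf {t | ∃ n : ℕ, t = sSup (Sset n)} := rfl
  have hS0 : ∀ n, (0:ℝ) ∈ Sset n := by
    intro n
    exact ⟨n, le_rfl, n, le_rfl, by rw [sub_self, freeNorm_zero]⟩
  have hfn2C : ∀ k l : ℕ, freeNorm z (μ k - μ l) ≤ 2*C := fun k l =>
    freeNorm_le_of_forall fun f hf => (le_abs_self _).trans (hpair2C f hf k l)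
  have hSbdd : ∀ n, BddAbove (Sset n) := by
    intro n
    refine ⟨2*C, ?_⟩
    rintro s ⟨k, _, l, _, rfl⟩
    exact hfn2C k l
  have hcaBdd : BddBelow {t | ∃ n : ℕ, t = sSup (Sset n)} := by
    refine ⟨0, ?_⟩
    rintro t ⟨n, rfl⟩
    exact le_csSup (hSbdd n) (hS0 n)
  have hsel : ∀ (ρ : ℝ), 0 < ρ → ∀ n : ℕ, ∃ k, n ≤ k ∧ ∃ l, n ≤ l ∧
      seqCa z μ - ρ < freeNorm z (μ k - μ l) := by
    intro ρ hρ n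
    have h1 : seqCa z μ ≤ sSup (Sset n) := by
      rw [hCa]; exact csInf_le hcaBdd ⟨n, rfl⟩
    have h2 : seqCa z μ - ρ < sSup (Sset n) := by linarith
    obtain ⟨s, hs, hlt⟩ := exists_lt_of_lt_csSup ⟨0, hS0 n⟩ h2
    obtain ⟨k, hk, l, hl, rfl⟩ := hs
    exact ⟨k, hk, l, hl, hlt⟩
  -- master estimate
  have master : ∀ θ : ℝ, 1 < θ → ∀ ρ : ℝ, 0 < ρ → seqCa z μ ≤ θ * seqDe z μ + 2*ρ := by
    intro θ hθ ρ hρ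
    have hθ0 : (0:ℝ) < θ := lt_trans one_pos hθ
    set δ : ℝ := ρ/8 with hδdef
    have hδ : 0 < δ := by positivity
    -- select pairs of far-apart elements beyond every index
    choose aa haa bb hbb hab using hsel ρ hρ
    set ν : ℕ → M →₀ ℝ := fun j => μ (aa j) - μ (bb j) with hν
    -- enumerate the countable set of relevant points
    have hScnt : (insert z (⋃ n, ((μ n).support : Set M))).Countable :=
      Set.Countable.insert z (Set.countable_iUnion fun n => (μ n).support.countable_toSet)
    obtain ⟨σ, hσ⟩ := hScnt.exists_eq_range ⟨z, Set.mem_insert _ _⟩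
    have hzσ : z ∈ Set.range σ := hσ ▸ Set.mem_insert _ _
    have hsuppσ : ∀ j, ∀ x ∈ (ν j).support, x ∈ Set.range σ := by
      intro j x hx
      rw [← hσ]
      have hx2 := Finsupp.support_sub (f := μ (aa j)) (g := μ (bb j)) hx
      refine Set.mem_insert_iff.mpr (Or.inr ?_)
      rcases Finset.mem_union.mp hx2 with h | h
      · exact Set.mem_iUnion.mpr ⟨aa j, h⟩
      · exact Set.mem_iUnion.mpr ⟨bb j, h⟩
    have hb2C : ∀ j, ∀ f : M → ℝ, Feas z f → |fpair (ν j) f| ≤ 2*C := fun j f hf =>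
      hpair2C f hf (aa j) (bb j)
    set g : ℕ → ℤ × ℕ → ℝ := fun j => gcoord θ σ z (ν j) with hg
    have hgsum : ∀ j, Summable fun c : ℤ × ℕ => wgt θ c.1 * |g j c| := fun j =>
      gcoord_abs_summable hθ hultra (ν j)
    have hGlow : ∀ j, seqCa z μ - ρ < ∑' c : ℤ × ℕ, wgt θ c.1 * |g j c| := fun j =>
      (hab j).trans_le (freeNorm_le_tsum_gcoord hθ hultra hzσ (ν j) (hsuppσ j))
    have hFle : ∀ j (F : Finset (ℤ × ℕ)), ∑ c ∈ F, wgt θ c.1 * |g j c| ≤ θ * (2*C) :=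
      fun j F => sum_wgt_gcoord_le hθ hultra (ν j) (hb2C j) F
    -- coordinatewise bounds and compactness extraction
    set Eq : ℕ ≃ ℤ × ℕ := (Denumerable.eqv (ℤ × ℕ)).symm with hEq
    set bnd : ℕ → ℝ := fun m => θ*(2*C) / wgt θ (Eq m).1 with hbnd
    have hcoord : ∀ j m, g j (Eq m) ∈ Set.Icc (-(bnd m)) (bnd m) := by
      intro j m
      have h1 : wgt θ (Eq m).1 * |g j (Eq m)| ≤ θ*(2*C) := by
        have := hFle j {Eq m}
        rwa [Finset.sum_singleton] at this
      have h2 : |g j (Eq m)| ≤ bnd m := by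
        rw [hbnd]
        rw [le_div_iff₀ (wgt_pos hθ (Eq m).1)]
        rw [mul_comm]
        exact h1
      exact Set.mem_Icc.mpr (abs_le.mp h2)
    obtain ⟨gl, -, φ, hφ, hconv0⟩ :=
      (isCompact_univ_pi fun m => isCompact_Icc).tendsto_subseq
        (x := fun j => fun m => g j (Eq m)) (fun j => by
          intro m _
          exact hcoord j m)
    set ginf : ℤ × ℕ → ℝ := fun c => gl (Eq.symm c) with hginf
    have hconv : ∀ c, Filter.Tendsto (fun p => g (φ p) c) Filter.atTop (nhds (ginf c)) := by
      intro c
      have h1 := (tendsto_pi_nhds.mp hconv0) (Eq.symm c)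
      simpa [Function.comp, Equiv.apply_symm_apply] using h1
    have hginfF : ∀ F : Finset (ℤ × ℕ), ∑ c ∈ F, wgt θ c.1 * |ginf c| ≤ θ*(2*C) := by
      intro F
      refine le_of_tendsto'
        (tendsto_finset_sum F fun c _ => Filter.Tendsto.const_mul _ (hconv c).abs)
        fun p => hFle (φ p) F
    have hginfsum : Summable fun c : ℤ × ℕ => wgt θ c.1 * |ginf c| :=
      summable_of_sum_le (fun c => mul_nonneg (wgt_pos hθ c.1).le (abs_nonneg _)) hginfF
    obtain ⟨F₀, hF₀⟩ : ∃ F₀ : Finset (ℤ × ℕ),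
        (∑' c : ℤ × ℕ, wgt θ c.1 * |ginf c|) - δ < ∑ c ∈ F₀, wgt θ c.1 * |ginf c| :=
      (hginfsum.hasSum.eventually (Ioi_mem_nhds (by linarith))).exists
    have htail0 : ∀ F : Finset (ℤ × ℕ), Disjoint F₀ F →
        ∑ c ∈ F, wgt θ c.1 * |ginf c| ≤ δ := by
      intro F hdisj
      have h1 : ∑ c ∈ F₀ ∪ F, wgt θ c.1 * |ginf c| ≤ ∑' c : ℤ × ℕ, wgt θ c.1 * |ginf c| :=
        Summable.sum_le_tsum _ (fun c _ => mul_nonneg (wgt_pos hθ c.1).le (abs_nonneg _)) hginfsum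
      rw [Finset.sum_union hdisj] at h1
      linarith
    have htailj : ∀ j, ∃ F : Finset (ℤ × ℕ),
        (∑' c : ℤ × ℕ, wgt θ c.1 * |g j c|) - δ < ∑ c ∈ F, wgt θ c.1 * |g j c| := fun j =>
      ((hgsum j).hasSum.eventually (Ioi_mem_nhds (by linarith))).exists
    choose tF htF using htailj
    have hstep : ∀ (q : ℕ) (Acc : Finset (ℤ × ℕ)), ∃ p : ℕ, q < p ∧
        ∑ c ∈ Acc, wgt θ c.1 * |g (φ p) c - ginf c| ≤ δ := by
      intro q Acc
      have htend : Filter.Tendsto (fun p => ∑ c ∈ Acc, wgt θ c.1 * |g (φ p) c - ginf c|)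
          Filter.atTop (nhds (∑ c ∈ Acc, wgt θ c.1 * |ginf c - ginf c|)) :=
        tendsto_finset_sum _ fun c _ =>
          Filter.Tendsto.const_mul _ (((hconv c).sub_const _).abs)
      simp only [sub_self, abs_zero, mul_zero, Finset.sum_const_zero] at htend
      have hev := htend.eventually_le_const hδ
      obtain ⟨p, hp1, hp2⟩ := (hev.and (Filter.eventually_gt_atTop q)).exists
      exact ⟨p, hp2, hp1⟩
    choose stepP hstep1 hstep2 using hstep
    -- the recursive chain of states
    set st : ℕ → ℕ × Finset (ℤ × ℕ) := fun i => Nat.rec ((0 : ℕ), F₀)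
      (fun _ prev => (stepP prev.1 prev.2,
        prev.2 ∪ (tF (φ (stepP prev.1 prev.2)) \ prev.2))) i with hst
    have hstS : ∀ i : ℕ, st (i+1) = (stepP (st i).1 (st i).2,
        (st i).2 ∪ (tF (φ (stepP (st i).1 (st i).2)) \ (st i).2)) := fun i => rfl
    have hmono : ∀ i : ℕ, (st i).2 ⊆ (st (i+1)).2 := by
      intro i; rw [hstS i]; exact Finset.subset_union_left
    have hchain : ∀ i i' : ℕ, i ≤ i' → (st i).2 ⊆ (st i').2 := by
      intro i i' h
      induction i', h using Nat.le_induction with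
      | base => exact subset_rfl
      | succ n hn ih => exact ih.trans (hmono n)
    have hF₀sub : ∀ i, F₀ ⊆ (st i).2 := fun i => hchain 0 i (Nat.zero_le i)
    have hlt : ∀ i, (st i).1 < (st (i+1)).1 := by
      intro i; rw [hstS i]; exact hstep1 _ _
    have hige : ∀ i, i ≤ (st i).1 := by
      intro i
      induction i with
      | zero => exact Nat.zero_le _
      | succ n ih => have := hlt n; omega
    -- the sign pattern
    set ε : ℤ × ℕ → ℝ := fun c => if c ∈ F₀ then sg (ginf c) else
      (if h : ∃ i, c ∈ (st (i+1)).2 \ (st i).2 then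
        sg (g (φ ((st ((Nat.find h)+1)).1)) c) else 0) with hεdef
    have hε1 : ∀ c, |ε c| ≤ 1 := by
      intro c; rw [hεdef]; simp only
      split
      · exact sg_abs_le _
      · split
        · exact sg_abs_le _
        · simp
    -- the per-stage estimate
    have hTi : ∀ i : ℕ, seqCa z μ - ρ - 6*δ ≤
        ∑' c : ℤ × ℕ, wgt θ c.1 * ε c * g (φ ((st (i+1)).1)) c := by
      intro i
      set j : ℕ := φ ((st (i+1)).1) with hjdef
      set Acc : Finset (ℤ × ℕ) := (st i).2 with hAcc
      set Fi : Finset (ℤ × ℕ) := tF j \ Acc with hFi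
      have hsplitset : (st (i+1)).2 = Acc ∪ Fi := rfl
      have hdisj : Disjoint Acc Fi := Finset.disjoint_sdiff
      set W : ℤ × ℕ → ℝ := fun c => wgt θ c.1 * ε c * g j c with hW
      have hWsum : Summable W := wgt_ge_summand_summable hθ hultra hε1 (ν j)
      have habsW : ∀ c, |W c| ≤ wgt θ c.1 * |g j c| := by
        intro c
        rw [hW]; simp only
        rw [abs_mul, abs_mul, abs_of_nonneg (wgt_pos hθ c.1).le]
        calc wgt θ c.1 * |ε c| * |g j c|
            = (wgt θ c.1 * |g j c|) * |ε c| := by ring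
          _ ≤ (wgt θ c.1 * |g j c|) * 1 := mul_le_mul_of_nonneg_left (hε1 c)
              (mul_nonneg (wgt_pos hθ c.1).le (abs_nonneg _))
          _ = wgt θ c.1 * |g j c| := mul_one _
      have hWsplit := Summable.sum_add_tsum_compl (s := Acc ∪ Fi) hWsum
      have hsubT : tF j ⊆ Acc ∪ Fi := by
        intro c hc
        by_cases h : c ∈ Acc
        · exact Finset.mem_union_left _ h
        · exact Finset.mem_union_right _ (Finset.mem_sdiff.mpr ⟨hc, h⟩)
      have hsum_mono : ∑ c ∈ tF j, wgt θ c.1 * |g j c|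
          ≤ ∑ c ∈ Acc ∪ Fi, wgt θ c.1 * |g j c| :=
        Finset.sum_le_sum_of_subset_of_nonneg hsubT
          (fun c _ _ => mul_nonneg (wgt_pos hθ c.1).le (abs_nonneg _))
      have hcompl_g := Summable.sum_add_tsum_compl (s := Acc ∪ Fi) (hgsum j)
      have hcompl_le : ∑' (c : ↑(↑(Acc ∪ Fi) : Set (ℤ × ℕ))ᶜ), wgt θ (↑c : ℤ × ℕ).1 * |g j ↑c| ≤ δ := by
        have h2 := htF j
        linarith
      have hWabs : Summable fun c => |W c| := hWsum.abs
      have hcomplW : |∑' (c : ↑(↑(Acc ∪ Fi) : Set (ℤ × ℕ))ᶜ), W ↑c| ≤ δ := by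
        have h1 : |∑' (c : ↑(↑(Acc ∪ Fi) : Set (ℤ × ℕ))ᶜ), W ↑c|
            ≤ ∑' (c : ↑(↑(Acc ∪ Fi) : Set (ℤ × ℕ))ᶜ), |W ↑c| := by
          have hs : Summable fun c : ↑(↑(Acc ∪ Fi) : Set (ℤ × ℕ))ᶜ => ‖W ↑c‖ := by
            exact (hWabs.subtype (↑(Acc ∪ Fi) : Set (ℤ × ℕ))ᶜ :)
          have := norm_tsum_le_tsum_norm hs
          simpa only [Real.norm_eq_abs] using this
        have h2 : ∑' (c : ↑(↑(Acc ∪ Fi) : Set (ℤ × ℕ))ᶜ), |W ↑c|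
            ≤ ∑' (c : ↑(↑(Acc ∪ Fi) : Set (ℤ × ℕ))ᶜ), wgt θ (↑c : ℤ × ℕ).1 * |g j ↑c| :=
          Summable.tsum_le_tsum (fun c => habsW ↑c)
            (hWabs.subtype _) ((hgsum j).subtype _)
        linarith
      rw [Finset.sum_union hdisj] at hWsplit
      -- the sign pattern is exact on `Fi`
      have hεFi : ∀ c ∈ Fi, ε c = sg (g j c) := by
        intro c hc
        have hcAcc : c ∉ Acc := (Finset.mem_sdiff.mp hc).2
        have hcF₀ : c ∉ F₀ := fun h => hcAcc (hF₀sub i h)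
        have hmem1 : c ∈ (st (i+1)).2 \ (st i).2 := by
          rw [hsplitset]
          exact Finset.mem_sdiff.mpr ⟨Finset.mem_union_right _ hc, hcAcc⟩
        have hex : ∃ i', c ∈ (st (i'+1)).2 \ (st i').2 := ⟨i, hmem1⟩
        have hfind : Nat.find hex = i := by
          rw [Nat.find_eq_iff]
          refine ⟨hmem1, ?_⟩
          intro i' hi' hmem
          have h1 : (st (i'+1)).2 ⊆ Acc := hchain (i'+1) i (by omega)
          exact hcAcc (h1 (Finset.mem_sdiff.mp hmem).1)
        rw [hεdef]; simp only [if_neg hcF₀]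
        rw [dif_pos hex, hfind]
      have hFiW : ∑ c ∈ Fi, W c = ∑ c ∈ Fi, wgt θ c.1 * |g j c| := by
        refine Finset.sum_congr rfl fun c hc => ?_
        rw [hW]; simp only
        rw [hεFi c hc, mul_assoc, sg_mul_self]
      -- lower bound for the sum over `Acc`
      have hd1 : ∑ c ∈ Acc, wgt θ c.1 * |g j c - ginf c| ≤ δ := hstep2 (st i).1 Acc
      have hd2 : ∑ c ∈ Acc, (if c ∈ F₀ then 0 else wgt θ c.1 * |ginf c|) ≤ δ := by
        have heq : ∑ c ∈ Acc, (if c ∈ F₀ then (0:ℝ) else wgt θ c.1 * |ginf c|)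
            = ∑ c ∈ Acc.filter (fun c => c ∉ F₀), wgt θ c.1 * |ginf c| := by
          rw [Finset.sum_filter]
          refine Finset.sum_congr rfl fun c _ => ?_
          by_cases h : c ∈ F₀ <;> simp [h]
        rw [heq]
        refine htail0 _ ?_
        refine Finset.disjoint_left.mpr fun c hc hc' => ?_
        exact (Finset.mem_filter.mp hc').2 hc
      have hptAcc : ∀ c ∈ Acc, wgt θ c.1 * |g j c|
          - 2 * (wgt θ c.1 * |g j c - ginf c|)
          - 2 * (if c ∈ F₀ then 0 else wgt θ c.1 * |ginf c|) ≤ W c := by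
        intro c hc
        have hw := (wgt_pos hθ c.1).le
        by_cases hcF₀ : c ∈ F₀
        · rw [if_pos hcF₀]
          have hεc : ε c = sg (ginf c) := by rw [hεdef]; simp only [if_pos hcF₀]
          rw [hW]; simp only
          rw [hεc]
          have h1 := sg_mul_ge (ginf c) (g j c)
          have h2 := mul_le_mul_of_nonneg_left h1 hw
          have h3 : wgt θ c.1 * (sg (ginf c) * g j c) = wgt θ c.1 * sg (ginf c) * g j c := by
            ring
          rw [h3] at h2
          nlinarith
        · rw [if_neg hcF₀]
          have h1 : -(wgt θ c.1 * |g j c|) ≤ W c := by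
            have := habsW c
            have h2 := neg_abs_le (W c)
            linarith
          have h2 : |g j c| ≤ |g j c - ginf c| + |ginf c| := by
            have := abs_sub_abs_le_abs_sub (g j c) (ginf c)
            have h3 := abs_nonneg (ginf c)
            linarith [abs_abs (ginf c), le_abs_self (ginf c)]
          nlinarith
      have hAccW : ∑ c ∈ Acc, wgt θ c.1 * |g j c| - 2*δ - 2*δ ≤ ∑ c ∈ Acc, W c := by
        have hsum := Finset.sum_le_sum hptAcc
        rw [Finset.sum_sub_distrib, Finset.sum_sub_distrib] at hsum
        rw [← Finset.mul_sum, ← Finset.mul_sum] at hsum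
        linarith
      -- combine
      have hlow : seqCa z μ - ρ - δ ≤
          ∑ c ∈ Acc, wgt θ c.1 * |g j c| + ∑ c ∈ Fi, wgt θ c.1 * |g j c| := by
        have h1 := htF j
        have h2 := hGlow j
        rw [Finset.sum_union hdisj] at hsum_mono
        linarith
      have hfin : seqCa z μ - ρ - 6*δ ≤ ∑' c : ℤ × ℕ, W c := by
        have h1 := hFiW
        have h2 := hcomplW
        rw [abs_le] at h2
        linarith
      exact hfin
    -- build the test function and conclude
    have hfeas := fEps_feas (σ := σ) (z := z) hθ hultra hε1
    set fstar : M → ℝ := fun x => θ⁻¹ * fEps θ σ z ε x with hfstar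
    have hpairT : ∀ i : ℕ, fpair (ν (φ ((st (i+1)).1))) fstar
        = θ⁻¹ * ∑' c : ℤ × ℕ, wgt θ c.1 * ε c * g (φ ((st (i+1)).1)) c := by
      intro i
      rw [hfstar]
      rw [fpair_smul_fun, fpair_fEps hθ hultra hε1]
    have hsupI : ∀ n : ℕ, θ⁻¹ * (seqCa z μ - ρ - 6*δ) ≤ sSup (Iset fstar n) := by
      intro n
      set j : ℕ := φ ((st (n+1)).1) with hjdef
      have hjge : n ≤ j := by
        have h1 : n + 1 ≤ (st (n+1)).1 := hige (n+1)
        have h2 : (st (n+1)).1 ≤ j := hφ.le_apply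
        omega
      have hmem : |fpair (ν j) fstar| ∈ Iset fstar n :=
        ⟨aa j, le_trans hjge (haa j), bb j, le_trans hjge (hbb j), rfl⟩
      have h3 : θ⁻¹ * (seqCa z μ - ρ - 6*δ) ≤ |fpair (ν j) fstar| := by
        have h4 := hTi n
        have h5 := hpairT n
        calc θ⁻¹ * (seqCa z μ - ρ - 6*δ)
            ≤ θ⁻¹ * ∑' c : ℤ × ℕ, wgt θ c.1 * ε c * g j c :=
              mul_le_mul_of_nonneg_left h4 (inv_nonneg.mpr hθ0.le)
          _ = fpair (ν j) fstar := h5.symm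
          _ ≤ |fpair (ν j) fstar| := le_abs_self _
      exact h3.trans (le_csSup (hIbdd fstar ⟨hfeas.1, hfeas.2⟩ n) hmem)
    have hInf : θ⁻¹ * (seqCa z μ - ρ - 6*δ) ≤ sInf (Uset fstar) :=
      le_csInf (hUne fstar) (by rintro u ⟨n, rfl⟩; exact hsupI n)
    have hmemD : sInf (Uset fstar) ∈ Dset := ⟨fstar, hfeas.1, hfeas.2, rfl⟩
    have hdeB : θ⁻¹ * (seqCa z μ - ρ - 6*δ) ≤ seqDe z μ := by
      rw [hDe]; exact hInf.trans (le_csSup hDbdd hmemD)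
    have h6 : seqCa z μ - ρ - 6*δ ≤ θ * seqDe z μ := by
      have h7 := mul_le_mul_of_nonneg_left hdeB hθ0.le
      rwa [← mul_assoc, mul_inv_cancel₀ hθ0.ne', one_mul] at h7
    rw [hδdef] at h6
    linarith
  -- conclusion
  refine le_of_forall_pos_le_add fun η hη => ?_
  set θ : ℝ := 1 + η/(8*C+4) with hθdef
  have hθ1 : 1 < θ := by
    rw [hθdef]
    have : 0 < η/(8*C+4) := by positivity
    linarith
  clear_value θ
  have hρ : 0 < η/4 := by positivity
  have h1 := master θ hθ1 (η/4) hρ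
  have h2 : (θ - 1) * seqDe z μ ≤ (θ - 1) * (2*C) :=
    mul_le_mul_of_nonneg_left hde2C (by linarith)
  have h3 : (θ - 1) * (2*C) ≤ η/2 := by
    rw [hθdef]
    have h4 : (1 + η/(8*C+4) - 1) * (2*C) = η * (2*C)/(8*C+4) := by ring
    rw [h4]
    rw [div_le_iff₀ (by positivity)]
    nlinarith
  have h5 : θ * seqDe z μ = seqDe z μ + (θ - 1) * seqDe z μ := by ring
  linarith
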